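/- Let M ∈ M_n(Z_p) be an upper Hessenberg matrix of the form M = [A; ε, B] (block upper Hessenberg with A of size n_A, B of size n_B, and the only nonzero entry of the lower-left block being ε in position (n_A+1, n_A)), size-sorted so that all eigenvalues of A are units mod p and χ_B(t) ≡ t^{n_B} mod p, and let μ ∈ ε·Z_p. Write M − μI = Q_M R_M and B − μI = Q_B R_B as QR-factorizations. Then Q_M is block upper triangular modulo ε, and with M' := R_M Q_M + μI =: [A'; ε', B'] and α := the (n_A+1, n_A+1) entry of R_M, one has |ε'| = |ε|·|α| and |α| ≤ max{|ε|, |(R_B)_{1,1}|}. -/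

import Mathlib

open Matrix Polynomial

private lemma sum_split11 {R : Type*} [AddCommMonoid R] {n m : ℕ} (f : Fin (n + m) → R) :
    ∑ k, f k = (∑ k : Fin n, f (Fin.castAdd m k)) + ∑ k : Fin m, f (Fin.natAdd n k) := by
  rw [← finSumFinEquiv.sum_comp f, Fintype.sum_sum_type]
  simp

private lemma isUnit_iff_toZMod11 {p : ℕ} [Fact p.Prime] (x : ℤ_[p]) :
    IsUnit x ↔ PadicInt.toZMod x ≠ 0 := by
  rw [ne_eq, ← RingHom.mem_ker, PadicInt.ker_toZMod, IsLocalRing.mem_maximalIdeal,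
    mem_nonunits_iff, not_not]

private lemma toZMod_eq_zero11 {p : ℕ} [Fact p.Prime] {x : ℤ_[p]} (h : (p : ℤ_[p]) ∣ x) :
    PadicInt.toZMod x = 0 := by
  by_contra h0
  have := (isUnit_iff_toZMod11 x).mpr h0
  rw [PadicInt.isUnit_iff] at this
  have := (PadicInt.norm_lt_one_iff_dvd x).2 h
  linarith

private lemma norm_le_of_dvd11 {p : ℕ} [Fact p.Prime] {x y : ℤ_[p]} (h : x ∣ y) : ‖y‖ ≤ ‖x‖ := by
  obtain ⟨c, rfl⟩ := h
  rw [norm_mul]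
  exact mul_le_of_le_one_right (norm_nonneg x) (PadicInt.norm_le_one c)

/-- one QR-round applied to a size-sorted Hessenberg matrix
`M = [A; ε, B]` with small shift `μ ∈ ε·ℤ_p`. Writing `M - μI = Q_M R_M` and
`B - μI = Q_B R_B`, the matrix `Q_M` is block upper triangular modulo `ε`, and with
`M' := R_M Q_M + μI` and `α := (R_M)_{a,a}` (0-indexed), the new connecting entry
`ε' = M'_{a, a-1}` satisfies `|ε'| = |ε|·|α|` and `|α| ≤ max(|ε|, |(R_B)_{0,0}|)`. -/
theorem statement11 {p : ℕ} [Fact p.Prime] {a b : ℕ} (ha : 0 < a) (hb : 0 < b)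
    (M : Matrix (Fin (a + b)) (Fin (a + b)) ℤ_[p])
    -- M is upper Hessenberg
    (hHess : ∀ i j : Fin (a + b), (j : ℕ) + 1 < (i : ℕ) → M i j = 0)
    -- the blocks A, B and the connecting entry ε
    (A : Matrix (Fin a) (Fin a) ℤ_[p])
    (hA : ∀ i j, A i j = M (Fin.castAdd b i) (Fin.castAdd b j))
    (B : Matrix (Fin b) (Fin b) ℤ_[p])
    (hB : ∀ i j, B i j = M (Fin.natAdd a i) (Fin.natAdd a j))
    (ε : ℤ_[p])
    (hε : ε = M ⟨a, by omega⟩ ⟨a - 1, by omega⟩)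
    -- the lower-left block vanishes apart from ε (size-sortedness of the block shape)
    (hE : ∀ i j : Fin (a + b), a ≤ (i : ℕ) → (j : ℕ) < a →
      ¬((i : ℕ) = a ∧ (j : ℕ) = a - 1) → M i j = 0)
    -- size-sorted: ε ≡ 0 mod p, χ_B ≡ t^b mod p, χ_A has only unit eigenvalues mod p
    (hεp : (p : ℤ_[p]) ∣ ε)
    (hχB : B.charpoly.map (PadicInt.toZMod) = X ^ b)
    (hχA : PadicInt.toZMod (A.charpoly.eval 0) ≠ 0)
    -- the shift
    (μ : ℤ_[p]) (hμ : ε ∣ μ)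
    -- QR-factorizations of M - μI and B - μI
    (QM RM : Matrix (Fin (a + b)) (Fin (a + b)) ℤ_[p])
    (hQM : IsUnit QM)
    (hRM : ∀ i j : Fin (a + b), (j : ℕ) < (i : ℕ) → RM i j = 0)
    (hfacM : M - μ • (1 : Matrix (Fin (a + b)) (Fin (a + b)) ℤ_[p]) = QM * RM)
    (QB RB : Matrix (Fin b) (Fin b) ℤ_[p])
    (hQB : IsUnit QB)
    (hRB : ∀ i j : Fin b, (j : ℕ) < (i : ℕ) → RB i j = 0)
    (hfacB : B - μ • (1 : Matrix (Fin b) (Fin b) ℤ_[p]) = QB * RB) :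
    -- Q_M is block upper triangular modulo ε
    (∀ i j : Fin (a + b), a ≤ (i : ℕ) → (j : ℕ) < a → ε ∣ QM i j) ∧
    -- |ε'| = |ε| ⋅ |α|
    ‖(RM * QM + μ • (1 : Matrix (Fin (a + b)) (Fin (a + b)) ℤ_[p]))
        (⟨a, by omega⟩ : Fin (a + b)) (⟨a - 1, by omega⟩ : Fin (a + b))‖
      = ‖ε‖ * ‖RM (⟨a, by omega⟩ : Fin (a + b)) (⟨a, by omega⟩ : Fin (a + b))‖ ∧
    -- |α| ≤ max(|ε|, |(R_B)_{1,1}|)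
    ‖RM (⟨a, by omega⟩ : Fin (a + b)) (⟨a, by omega⟩ : Fin (a + b))‖
      ≤ max ‖ε‖ ‖RB (⟨0, hb⟩ : Fin b) (⟨0, hb⟩ : Fin b)‖ := by
  classical
  have haab : a < a + b := by omega
  have ha1 : a - 1 < a + b := by omega
  set x : Fin (a + b) := ⟨a, haab⟩ with hxdef
  set y : Fin (a + b) := ⟨a - 1, ha1⟩ with hydef
  set j₀ : Fin a := ⟨a - 1, by omega⟩ with hj₀def
  set i₀ : Fin b := ⟨0, hb⟩ with hi₀def
  set Q11 : Matrix (Fin a) (Fin a) ℤ_[p] :=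
    Matrix.of (fun i j => QM (Fin.castAdd b i) (Fin.castAdd b j)) with hQ11d
  set Q12 : Matrix (Fin a) (Fin b) ℤ_[p] :=
    Matrix.of (fun i j => QM (Fin.castAdd b i) (Fin.natAdd a j)) with hQ12d
  set Q21 : Matrix (Fin b) (Fin a) ℤ_[p] :=
    Matrix.of (fun i j => QM (Fin.natAdd a i) (Fin.castAdd b j)) with hQ21d
  set Q22 : Matrix (Fin b) (Fin b) ℤ_[p] :=
    Matrix.of (fun i j => QM (Fin.natAdd a i) (Fin.natAdd a j)) with hQ22d
  set R11 : Matrix (Fin a) (Fin a) ℤ_[p] :=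
    Matrix.of (fun i j => RM (Fin.castAdd b i) (Fin.castAdd b j)) with hR11d
  set R12 : Matrix (Fin a) (Fin b) ℤ_[p] :=
    Matrix.of (fun i j => RM (Fin.castAdd b i) (Fin.natAdd a j)) with hR12d
  set R22 : Matrix (Fin b) (Fin b) ℤ_[p] :=
    Matrix.of (fun i j => RM (Fin.natAdd a i) (Fin.natAdd a j)) with hR22d
  have hμp : (p : ℤ_[p]) ∣ μ := dvd_trans hεp hμ
  have hμ0 : PadicInt.toZMod μ = 0 := toZMod_eq_zero11 hμp
  have hxi : Fin.natAdd a i₀ = x := by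
    rw [hxdef, hi₀def]; ext; simp
  have hyj : Fin.castAdd b j₀ = y := by
    rw [hydef, hj₀def]; ext; simp
  have hfac : ∀ i j, M i j - μ * (if i = j then 1 else 0) = ∑ k, QM i k * RM k j := by
    intro i j
    have h := congrFun (congrFun hfacM i) j
    simpa [Matrix.sub_apply, Matrix.smul_apply, Matrix.one_apply, Matrix.mul_apply,
      smul_eq_mul] using h
  have hcast : ∀ i j : Fin a, (Fin.castAdd b i = Fin.castAdd b j) ↔ i = j := by
    intro i j
    constructor
    · intro h; ext; simpa [Fin.ext_iff] using h
    · rintro rfl; rfl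
  have hnat : ∀ i j : Fin b, (Fin.natAdd a i = Fin.natAdd a j) ↔ i = j := by
    intro i j
    constructor
    · intro h; rw [Fin.ext_iff] at h ⊢; simp only [Fin.coe_natAdd] at h; omega
    · rintro rfl; rfl
  -- block equation 1 : A - μ•1 = Q11 * R11
  have h11 : A - μ • (1 : Matrix (Fin a) (Fin a) ℤ_[p]) = Q11 * R11 := by
    ext i j
    have h := hfac (Fin.castAdd b i) (Fin.castAdd b j)
    rw [sum_split11 (fun k => QM (Fin.castAdd b i) k * RM k (Fin.castAdd b j))] at h
    have hz : ∑ k : Fin b,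
        QM (Fin.castAdd b i) (Fin.natAdd a k) * RM (Fin.natAdd a k) (Fin.castAdd b j) = 0 := by
      refine Finset.sum_eq_zero fun k _ => ?_
      rw [hRM _ _ (by have hjl := j.isLt; simp only [Fin.coe_castAdd, Fin.coe_natAdd]; omega),
        mul_zero]
    rw [hz, add_zero] at h
    rw [Matrix.sub_apply, Matrix.smul_apply, Matrix.one_apply, smul_eq_mul, Matrix.mul_apply,
      hA i j]
    simp only [hQ11d, hR11d, Matrix.of_apply]
    rw [← h]
    simp only [hcast]
  -- det (A - μ•1) is a unit
  have hdetA : IsUnit (A - μ • (1 : Matrix (Fin a) (Fin a) ℤ_[p])).det := by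
    rw [isUnit_iff_toZMod11]
    have hmap : (A - μ • (1 : Matrix (Fin a) (Fin a) ℤ_[p])).map PadicInt.toZMod
        = A.map PadicInt.toZMod := by
      ext i j
      simp only [Matrix.map_apply, Matrix.sub_apply, Matrix.smul_apply, Matrix.one_apply,
        smul_eq_mul, map_sub, _root_.map_mul, hμ0, zero_mul, sub_zero]
    rw [RingHom.map_det, RingHom.mapMatrix_apply, hmap, ← RingHom.mapMatrix_apply, ← RingHom.map_det]
    have hdet0 : A.det = (-1) ^ a * A.charpoly.coeff 0 := by
      simpa using A.det_eq_sign_charpoly_coeff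
    rw [hdet0, _root_.map_mul, _root_.map_pow, _root_.map_neg, _root_.map_one, Polynomial.coeff_zero_eq_eval_zero]
    exact mul_ne_zero (pow_ne_zero _ (neg_ne_zero.2 one_ne_zero)) hχA
  have hdetR11 : IsUnit R11.det := by
    have hdetQR : Q11.det * R11.det = (A - μ • (1 : Matrix (Fin a) (Fin a) ℤ_[p])).det := by
      rw [h11, Matrix.det_mul]
    exact isUnit_of_mul_isUnit_right (by rwa [hdetQR])
  -- block equation 2 : Q21 * R11 = ε at (i₀, j₀) and 0 elsewhere
  have h21 : Q21 * R11
      = Matrix.of (fun (i : Fin b) (j : Fin a) => if i = i₀ ∧ j = j₀ then ε else 0) := by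
    ext i j
    have h := hfac (Fin.natAdd a i) (Fin.castAdd b j)
    rw [sum_split11 (fun k => QM (Fin.natAdd a i) k * RM k (Fin.castAdd b j))] at h
    have hz : ∑ k : Fin b,
        QM (Fin.natAdd a i) (Fin.natAdd a k) * RM (Fin.natAdd a k) (Fin.castAdd b j) = 0 := by
      refine Finset.sum_eq_zero fun k _ => ?_
      rw [hRM _ _ (by have hjl := j.isLt; simp only [Fin.coe_castAdd, Fin.coe_natAdd]; omega),
        mul_zero]
    rw [hz, add_zero] at h
    have hne : ¬(Fin.natAdd a i = Fin.castAdd b j) := by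
      rw [Fin.ext_iff]
      have hjl := j.isLt
      simp only [Fin.coe_castAdd, Fin.coe_natAdd]
      omega
    rw [if_neg hne, mul_zero, sub_zero] at h
    rw [Matrix.mul_apply]
    simp only [hQ21d, hR11d, Matrix.of_apply]
    rw [← h]
    by_cases hij : i = i₀ ∧ j = j₀
    · obtain ⟨hi, hj⟩ := hij
      subst hi; subst hj
      rw [if_pos ⟨rfl, rfl⟩, hxi, hyj, ← hε]
    · rw [if_neg hij]
      refine hE _ _ (by simp) (by simp) ?_
      rw [hi₀def, hj₀def] at hij
      simp only [Fin.ext_iff, Fin.coe_natAdd, Fin.coe_castAdd]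
      intro hc
      exact hij ⟨by rw [Fin.ext_iff]; simp; omega, by rw [Fin.ext_iff]; simp; omega⟩
  have hR11inv : R11 * R11⁻¹ = 1 := Matrix.mul_nonsing_inv _ hdetR11
  have hQ21 : Q21
      = Matrix.of (fun (i : Fin b) (j : Fin a) => if i = i₀ ∧ j = j₀ then ε else 0) * R11⁻¹ := by
    calc Q21 = Q21 * (R11 * R11⁻¹) := by rw [hR11inv, Matrix.mul_one]
      _ = (Q21 * R11) * R11⁻¹ := by rw [Matrix.mul_assoc]
      _ = _ := by rw [h21]
  have hQ21e : ∀ i j, Q21 i j = if i = i₀ then ε * R11⁻¹ j₀ j else 0 := by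
    intro i j
    rw [hQ21, Matrix.mul_apply]
    by_cases hi : i = i₀
    · subst hi
      rw [if_pos rfl]
      simp only [Matrix.of_apply, true_and, ite_mul, zero_mul]
      rw [Finset.sum_ite_eq' Finset.univ j₀ (fun k => ε * R11⁻¹ k j)]
      simp
    · rw [if_neg hi]
      refine Finset.sum_eq_zero fun k _ => ?_
      simp [hi]
  -- Goal 1
  have goal1 : ∀ i j : Fin (a + b), a ≤ (i : ℕ) → (j : ℕ) < a → ε ∣ QM i j := by
    intro i j hi hj
    have hib : (i : ℕ) - a < b := by have := i.isLt; omega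
    have h := hQ21e ⟨(i : ℕ) - a, hib⟩ ⟨(j : ℕ), hj⟩
    rw [hQ21d] at h
    simp only [Matrix.of_apply] at h
    have hii : Fin.natAdd a (⟨(i : ℕ) - a, hib⟩ : Fin b) = i := by
      rw [Fin.ext_iff]; simp only [Fin.coe_natAdd]; omega
    have hjj : Fin.castAdd b (⟨(j : ℕ), hj⟩ : Fin a) = j := by
      rw [Fin.ext_iff]; simp
    rw [hii, hjj] at h
    rw [h]
    split
    · exact dvd_mul_right ε _
    · exact dvd_zero ε
  -- the diagonal entry of R11⁻¹
  have hRdiag : R11 j₀ j₀ * R11⁻¹ j₀ j₀ = 1 := by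
    have h := congrFun (congrFun hR11inv j₀) j₀
    rw [Matrix.mul_apply, Finset.sum_eq_single j₀] at h
    · simpa [Matrix.one_apply] using h
    · intro k _ hk
      have hkv : (k : ℕ) < a - 1 := by
        have h1 := k.isLt
        have h2 : (k : ℕ) ≠ a - 1 := by
          intro hc
          exact hk (by rw [Fin.ext_iff, hj₀def]; simpa using hc)
        omega
      have he3 : R11 j₀ k = RM (Fin.castAdd b j₀) (Fin.castAdd b k) := by rw [hR11d]; rfl
      rw [he3, hRM _ _ (by simp only [Fin.coe_castAdd, hj₀def]; omega), zero_mul]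
    · intro h; exact absurd (Finset.mem_univ _) h
  have huu : IsUnit (R11⁻¹ j₀ j₀) :=
    IsUnit.of_mul_eq_one _ (by rw [mul_comm]; exact hRdiag)
  have hnu : ‖R11⁻¹ j₀ j₀‖ = 1 := PadicInt.isUnit_iff.mp huu
  -- Goal 2
  have hxy : x ≠ y := by
    intro hc
    have hcc := congrArg Fin.val hc
    rw [hxdef, hydef] at hcc
    simp only at hcc
    omega
  have hentry : (RM * QM + μ • (1 : Matrix (Fin (a + b)) (Fin (a + b)) ℤ_[p])) x y
      = RM x x * (ε * R11⁻¹ j₀ j₀) := by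
    rw [Matrix.add_apply, Matrix.smul_apply, Matrix.one_apply_ne hxy, smul_zero, add_zero,
      Matrix.mul_apply, sum_split11 (fun k => RM x k * QM k y)]
    have hz : ∑ k : Fin a, RM x (Fin.castAdd b k) * QM (Fin.castAdd b k) y = 0 := by
      refine Finset.sum_eq_zero fun k _ => ?_
      rw [hRM _ _ (by have := k.isLt; rw [hxdef]; simp only [Fin.coe_castAdd]; exact this),
        zero_mul]
    rw [hz, zero_add, Finset.sum_eq_single i₀]
    · have he1 : QM (Fin.natAdd a i₀) y = Q21 i₀ j₀ := by
        rw [hQ21d]; simp only [Matrix.of_apply]; rw [hyj]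
      rw [he1, hxi, hQ21e i₀ j₀, if_pos rfl]
    · intro k _ hk
      have he2 : QM (Fin.natAdd a k) y = Q21 k j₀ := by
        rw [hQ21d]; simp only [Matrix.of_apply]; rw [hyj]
      rw [he2, hQ21e, if_neg hk, mul_zero]
    · intro h; exact absurd (Finset.mem_univ _) h
  have goal2 : ‖(RM * QM + μ • (1 : Matrix (Fin (a + b)) (Fin (a + b)) ℤ_[p])) x y‖
      = ‖ε‖ * ‖RM x x‖ := by
    rw [hentry, norm_mul, norm_mul, hnu, mul_one, mul_comm]
  -- block equation 3 : B - μ•1 = Q21 * R12 + Q22 * R22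
  have h22 : B - μ • (1 : Matrix (Fin b) (Fin b) ℤ_[p]) = Q21 * R12 + Q22 * R22 := by
    ext i j
    have h := hfac (Fin.natAdd a i) (Fin.natAdd a j)
    rw [sum_split11 (fun k => QM (Fin.natAdd a i) k * RM k (Fin.natAdd a j))] at h
    rw [Matrix.sub_apply, Matrix.smul_apply, Matrix.one_apply, smul_eq_mul, Matrix.add_apply,
      Matrix.mul_apply, Matrix.mul_apply, hB i j]
    simp only [hQ21d, hQ22d, hR12d, hR22d, Matrix.of_apply]
    rw [← h]
    simp only [hnat]
  -- Q22 is invertible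
  have hQ21map : Q21.map PadicInt.toZMod = 0 := by
    ext i j
    rw [Matrix.map_apply, hQ21e i j, Matrix.zero_apply]
    split
    · exact toZMod_eq_zero11 (dvd_trans hεp (dvd_mul_right ε _))
    · exact map_zero _
  have hQb : QM.submatrix finSumFinEquiv finSumFinEquiv = Matrix.fromBlocks Q11 Q12 Q21 Q22 := by
    ext i j
    cases i with
    | inl i => cases j with
      | inl j => simp [hQ11d]
      | inr j => simp [hQ12d]
    | inr i => cases j with
      | inl j => simp [hQ21d]
      | inr j => simp [hQ22d]
  have hdQM : IsUnit QM.det := (Matrix.isUnit_iff_isUnit_det QM).mp hQM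
  have hdetQ22 : IsUnit Q22.det := by
    rw [isUnit_iff_toZMod11] at hdQM ⊢
    rw [← Matrix.det_submatrix_equiv_self finSumFinEquiv QM, hQb, RingHom.map_det,
      RingHom.mapMatrix_apply, Matrix.fromBlocks_map, hQ21map,
      Matrix.det_fromBlocks_zero₂₁] at hdQM
    rw [RingHom.map_det, RingHom.mapMatrix_apply]
    exact right_ne_zero_of_mul hdQM
  have hNQ : Q22⁻¹ * Q22 = 1 := Matrix.nonsing_inv_mul _ hdetQ22
  -- the first columns
  have hα22 : R22 i₀ i₀ = RM x x := by
    rw [hR22d]; simp only [Matrix.of_apply]; rw [hxi]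
  have hcol : ∀ i, (Q22 * R22) i i₀ = Q22 i i₀ * RM x x := by
    intro i
    rw [Matrix.mul_apply, Finset.sum_eq_single i₀]
    · rw [hα22]
    · intro k _ hk
      have hkv : 0 < (k : ℕ) := by
        rcases Nat.eq_zero_or_pos (k : ℕ) with h0 | h0
        · exact absurd (by rw [Fin.ext_iff, hi₀def]; simpa using h0) hk
        · exact h0
      have he4 : R22 k i₀ = RM (Fin.natAdd a k) (Fin.natAdd a i₀) := by rw [hR22d]; rfl
      rw [he4, hRM _ _ (by rw [hi₀def]; simp only [Fin.coe_natAdd]; simpa using hkv), mul_zero]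
    · intro h; exact absurd (Finset.mem_univ _) h
  have hQBcol : ∀ i, (QB * RB) i i₀ = QB i i₀ * RB i₀ i₀ := by
    intro i
    rw [Matrix.mul_apply, Finset.sum_eq_single i₀]
    · intro k _ hk
      have hkv : 0 < (k : ℕ) := by
        rcases Nat.eq_zero_or_pos (k : ℕ) with h0 | h0
        · exact absurd (by rw [Fin.ext_iff, hi₀def]; simpa using h0) hk
        · exact h0
      rw [hRB _ _ (by rw [hi₀def]; simpa using hkv), mul_zero]
    · intro h; exact absurd (Finset.mem_univ _) h
  have hQ22R22 : Q22 * R22 = QB * RB - Q21 * R12 := by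
    have htrans : QB * RB = Q21 * R12 + Q22 * R22 := by rw [← hfacB, h22]
    rw [htrans, add_sub_cancel_left]
  have hdvdQ21R12 : ∀ i, ε ∣ (Q21 * R12) i i₀ := by
    intro i
    rw [Matrix.mul_apply]
    refine Finset.dvd_sum fun k _ => ?_
    rw [hQ21e]
    split
    · exact (dvd_mul_right ε _).mul_right _
    · simp
  have hαformula : RM x x = ∑ i, Q22⁻¹ i₀ i * ((QB * RB) i i₀ - (Q21 * R12) i i₀) := by
    have h1 : (1 : ℤ_[p]) = ∑ i, Q22⁻¹ i₀ i * Q22 i i₀ := by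
      have h := congrFun (congrFun hNQ i₀) i₀
      rw [Matrix.mul_apply] at h
      simpa [Matrix.one_apply] using h.symm
    calc RM x x = (∑ i, Q22⁻¹ i₀ i * Q22 i i₀) * RM x x := by rw [← h1, one_mul]
      _ = ∑ i, Q22⁻¹ i₀ i * (Q22 i i₀ * RM x x) := by
          rw [Finset.sum_mul]; exact Finset.sum_congr rfl fun i _ => by ring
      _ = ∑ i, Q22⁻¹ i₀ i * ((QB * RB) i i₀ - (Q21 * R12) i i₀) := by
          refine Finset.sum_congr rfl fun i _ => ?_
          rw [← hcol i, hQ22R22, Matrix.sub_apply]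
  have goal3 : ‖RM x x‖ ≤ max ‖ε‖ ‖RB i₀ i₀‖ := by
    rw [hαformula]
    refine IsUltrametricDist.norm_sum_le_of_forall_le_of_nonneg
      (le_trans (norm_nonneg ε) (le_max_left _ _)) fun i _ => ?_
    rw [norm_mul]
    refine le_trans (mul_le_of_le_one_left (norm_nonneg _) (PadicInt.norm_le_one _)) ?_
    rw [sub_eq_add_neg]
    refine le_trans (PadicInt.nonarchimedean _ _) (max_le ?_ ?_)
    · rw [hQBcol i, norm_mul]
      exact le_trans (mul_le_of_le_one_left (norm_nonneg _) (PadicInt.norm_le_one _))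
        (le_max_right _ _)
    · rw [norm_neg]
      exact le_trans (norm_le_of_dvd11 (hdvdQ21R12 i)) (le_max_left _ _)
  exact ⟨goal1, goal2, goal3⟩
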